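/- (Degree Inequality, part 1) Let H* = ℚ[x₁,…,x_k]/(u₁,…,u_k) be a pure model (degrees of x_i and u_i increasing, u_i with no constant/linear terms) for a positively elliptic algebra that does not split, i.e., admits no presentation in which the first l relations (0 < l < k) involve only the first l generators. Then for every i < k, |u_i| ≥ |x₁| + |x_{i+1}|. -/
import Mathlib


open MvPolynomial

namespace Halperin

lemma key {k : ℕ} (w : Fin k → ℕ) (m : Fin k →₀ ℕ) (j : Fin k) (hmj : m j ≠ 0)
    (htot : 2 ≤ m.sum fun _ e => e) (c : ℕ) (hc : ∀ t, c ≤ w t) :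
    c + w j ≤ Finsupp.weight w m := by
  have hweq : Finsupp.weight w m = ∑ t ∈ m.support, m t * w t := by
    rw [Finsupp.weight_apply, Finsupp.sum]; simp [smul_eq_mul]
  have hj : j ∈ m.support := Finsupp.mem_support_iff.mpr hmj
  have hsplit : ∑ t ∈ m.support, m t * w t
      = m j * w j + ∑ t ∈ m.support.erase j, m t * w t :=
    (Finset.add_sum_erase _ _ hj).symm
  rcases Nat.lt_or_ge (m j) 2 with h1 | h2
  · have hmj1 : m j = 1 := by omega
    have htot' : (m.sum fun _ e => e) = m j + ∑ t ∈ m.support.erase j, m t := by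
      rw [Finsupp.sum]; exact (Finset.add_sum_erase _ _ hj).symm
    have : 1 ≤ ∑ t ∈ m.support.erase j, m t := by omega
    obtain ⟨s, hs, hms⟩ : ∃ s ∈ m.support.erase j, m s ≠ 0 := by
      by_contra hcon
      push_neg at hcon
      have : ∑ t ∈ m.support.erase j, m t = 0 := Finset.sum_eq_zero hcon
      omega
    have h1 : c ≤ m s * w s :=
      le_trans (hc s) (Nat.le_mul_of_pos_left _ (Nat.pos_of_ne_zero hms))
    have h2 : m s * w s ≤ ∑ t ∈ m.support.erase j, m t * w t :=
      Finset.single_le_sum (f := fun t => m t * w t) (fun t _ => Nat.zero_le _) hs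
    have h3 : m j * w j = w j := by rw [hmj1, one_mul]
    omega
  · have : 2 * w j ≤ m j * w j := Nat.mul_le_mul_right _ h2
    have hcj : c ≤ w j := hc j
    omega

abbrev A (k : ℕ) := MvPolynomial (Fin k) ℚ

/-- The degree-`n` graded piece of `A k ⧸ I` with respect to weights `w`. -/
noncomputable def piece {k : ℕ} (w : Fin k → ℕ) (I : Ideal (A k)) (n : ℤ) :
    Submodule ℚ (A k ⧸ I) :=
  if 0 ≤ n then
    (weightedHomogeneousSubmodule ℚ w n.toNat).map (Ideal.Quotient.mkₐ ℚ I).toLinearMap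
  else ⊥

/-- `u` is a regular sequence: each `u i` is a nonzerodivisor modulo the previous ones. -/
def IsRegSeq {k : ℕ} (u : Fin k → A k) : Prop :=
  ∀ i : Fin k, ∀ v : A k,
    v * u i ∈ Ideal.span {p | ∃ j, j < i ∧ p = u j} →
    v ∈ Ideal.span {p | ∃ j, j < i ∧ p = u j}

/-- A presentation of a positively elliptic algebra. -/
structure Presentation (k : ℕ) where
  w : Fin k → ℕ
  du : Fin k → ℕ
  u : Fin k → A k
  wpos : ∀ i, 0 < w i
  weven : ∀ i, Even (w i)
  uhom : ∀ i, (u i).IsWeightedHomogeneous w (du i)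
  unolin : ∀ i, ∀ m ∈ (u i).support, 2 ≤ m.sum fun _ e => e
  reg : IsRegSeq u

noncomputable def Presentation.I {k : ℕ} (P : Presentation k) : Ideal (A k) :=
  Ideal.span (Set.range P.u)

abbrev Presentation.H {k : ℕ} (P : Presentation k) := A k ⧸ P.I

/-- Extra conditions making a presentation a pure model with ordered degrees. -/
def Presentation.Pure {k : ℕ} (P : Presentation k) : Prop :=
  Monotone P.w ∧ Monotone P.du ∧ ∀ i, 2 * P.w i ≤ P.du i

/-- `δ` is a graded derivation of degree `d` on `A k ⧸ I`. -/
structure IsGradedDer {k : ℕ} (w : Fin k → ℕ) (I : Ideal (A k)) (d : ℤ)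
    (δ : (A k ⧸ I) →ₗ[ℚ] (A k ⧸ I)) : Prop where
  leibniz : ∀ a b, δ (a * b) = δ a * b + a * δ b
  graded : ∀ n : ℤ, ∀ x ∈ piece w I n, δ x ∈ piece w I (n + d)

/-- `n` is the formal dimension (socle degree). -/
def IsFormalDim {k : ℕ} (w : Fin k → ℕ) (I : Ideal (A k)) (n : ℕ) : Prop :=
  piece w I n ≠ ⊥ ∧ ∀ m : ℤ, (n : ℤ) < m → piece w I m = ⊥

/-- `H*` splits: it admits a presentation in which the first `l` relations
only involve the first `l` generators (for some `0 < l < k'`). -/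
def Splits {k : ℕ} (P : Presentation k) : Prop :=
  ∃ (k' : ℕ) (P' : Presentation k') (l : ℕ) (e : P.H ≃ₐ[ℚ] P'.H),
    0 < l ∧ l < k' ∧
    (∀ n : ℤ, (piece P.w P.I n).map e.toLinearMap = piece P'.w P'.I n) ∧
    ∀ i : Fin k', (i : ℕ) < l →
      ∀ m ∈ (P'.u i).support, ∀ j : Fin k', l ≤ (j : ℕ) → m j = 0

/-- Degree Inequality, part 1. -/
theorem stmt10 {k : ℕ} (P : Presentation k) (hpure : P.Pure) (hns : ¬ Splits P)
    (i : Fin k) (h : (i : ℕ) + 1 < k) :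
    P.w ⟨0, by omega⟩ + P.w ⟨(i : ℕ) + 1, h⟩ ≤ P.du i := by
  by_contra hlt
  push_neg at hlt
  apply hns
  refine ⟨k, P, (i : ℕ) + 1, AlgEquiv.refl, by omega, h, ?_, ?_⟩
  · intro n
    have h1 : (AlgEquiv.refl : P.H ≃ₐ[ℚ] P.H) = 1 := rfl
    rw [h1, AlgEquiv.one_toLinearMap, Module.End.one_eq_id, Submodule.map_id]
  · intro i' hi' m hm j hj
    by_contra hmj
    have hcoeff : coeff m (P.u i') ≠ 0 := mem_support_iff.mp hm
    have hdeg : (Finsupp.weight P.w) m = P.du i' := P.uhom i' hcoeff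
    have htot : 2 ≤ m.sum fun _ e => e := P.unolin i' m hm
    have hc : ∀ t, P.w ⟨0, by omega⟩ ≤ P.w t := fun t => hpure.1 (by rw [Fin.le_def]; exact Nat.zero_le _)
    have hkey := key P.w m j hmj htot _ hc
    have hwj : P.w ⟨(i : ℕ) + 1, h⟩ ≤ P.w j := hpure.1 (by rw [Fin.le_def]; exact hj)
    have hdu : P.du i' ≤ P.du i := hpure.2.1 (by rw [Fin.le_def]; omega)
    omega

end Halperin
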